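/- Let K be a field of characteristic zero, a ∈ lie_m^m and b ∈ lie_n^n tuples such that the tangential derivations D_a and D_b are special, i.e., D_a(x_1 + ⋯ + x_m) = 0 and D_b(x_1 + ⋯ + x_n) = 0, and let 1 ≤ i ≤ m. Then the composed tangential derivation is also special: D_{a∘_ib}(x_1 + x_2 + ⋯ + x_{m+n−1}) = 0. -/

import Mathlib

open FreeLieAlgebra

variable (K : Type) [Field K] [CharZero K]

/-- The free Lie algebra over `K` on `N` generators `x_1, …, x_N`
(indexed here 0-based by `Fin N`). -/
abbrev lieF (N : ℕ) : Type := FreeLieAlgebra K (Fin N)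

/-- The `(k+1)`-st generator of `lieF K N` (0-based index `k`), junk value `0` out of range. -/
noncomputable def xg (N k : ℕ) : lieF K N :=
  if h : k < N then FreeLieAlgebra.of K (⟨k, h⟩ : Fin N) else 0

/-- The Lie algebra homomorphism `Φ_i : lie_m → lie_{m+n-1}` sending (0-based) `x_j ↦ x_j`
for `j < i`, `x_i ↦ x_i + x_{i+1} + ⋯ + x_{i+n-1}`, and `x_j ↦ x_{j+n-1}` for `j > i`. -/
noncomputable def PhiL (m n i : ℕ) : lieF K m →ₗ⁅K⁆ lieF K (m + n - 1) :=
  FreeLieAlgebra.lift K fun j : Fin m =>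
    if (j : ℕ) < i then xg K (m + n - 1) (j : ℕ)
    else if (j : ℕ) = i then ∑ t : Fin n, xg K (m + n - 1) (i + (t : ℕ))
    else xg K (m + n - 1) ((j : ℕ) + n - 1)

/-- The Lie algebra homomorphism `Ψ_i : lie_n → lie_{m+n-1}` sending (0-based)
`x_j ↦ x_{i+j}`. -/
noncomputable def PsiL (m n i : ℕ) : lieF K n →ₗ⁅K⁆ lieF K (m + n - 1) :=
  FreeLieAlgebra.lift K fun j : Fin n => xg K (m + n - 1) (i + (j : ℕ))

/-- The partial composition `f ∘_i g := Φ_i(f) + Ψ_i(g)` of free Lie algebra elements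
(the pivot `i` is 0-based). -/
noncomputable def compL {m n : ℕ} (f : lieF K m) (i : ℕ) (g : lieF K n) :
    lieF K (m + n - 1) :=
  PhiL K m n i f + PsiL K m n i g

/-- The canonical identification `lie_N ≅ lie_{N'}` for `N = N'`. -/
noncomputable def recastL {N N' : ℕ} (hNN : N = N') : lieF K N →ₗ⁅K⁆ lieF K N' :=
  FreeLieAlgebra.lift K fun j => FreeLieAlgebra.of K (Fin.cast hNN j)

/-- The Lie algebra of derivations of `lie_N`. -/
abbrev DerL (N : ℕ) : Type := LieDerivation K (lieF K N) (lieF K N)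

/-- Entry of a tuple at a natural-number index (junk value `0` out of range). -/
noncomputable def tget {N : ℕ} (a : Fin N → lieF K N) (k : ℕ) : lieF K N :=
  if h : k < N then a ⟨k, h⟩ else 0

/-- The composed tuple `a ∘_i b ∈ (lie_{m+n-1})^{m+n-1}` (0-based indices): its entries are
`Φ_i(a_j)` in slot `j` for `j < i`, `Φ_i(a_i) + Ψ_i(b_k)` in slot `i+k` for `0 ≤ k < n`,
and `Φ_i(a_j)` in slot `j+n-1` for `j > i`. -/
noncomputable def compTup {m n : ℕ} (a : Fin m → lieF K m) (i : ℕ)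
    (b : Fin n → lieF K n) : Fin (m + n - 1) → lieF K (m + n - 1) := fun k =>
  if (k : ℕ) < i then PhiL K m n i (tget K a (k : ℕ))
  else if (k : ℕ) < i + n then
    PhiL K m n i (tget K a i) + PsiL K m n i (tget K b ((k : ℕ) - i))
  else PhiL K m n i (tget K a ((k : ℕ) + 1 - n))

/-- The Lie bracket in the first argument commutes with finite sums. -/
lemma sum_lie' {ι L : Type*} [LieRing L] (s : Finset ι) (f : ι → L) (y : L) :
    ⁅∑ x ∈ s, f x, y⁆ = ∑ x ∈ s, ⁅f x, y⁆ :=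
  map_sum (AddMonoidHom.mk' (fun x => ⁅x, y⁆) (fun a b => add_lie a b y)) f s

/-- Lie algebra homomorphisms commute with finite sums. -/
lemma lieHom_map_sum {R L L' ι : Type*} [CommRing R] [LieRing L] [LieAlgebra R L]
    [LieRing L'] [LieAlgebra R L'] (f : L →ₗ⁅R⁆ L') (s : Finset ι) (g : ι → L) :
    f (∑ x ∈ s, g x) = ∑ x ∈ s, f (g x) :=
  map_sum f.toLinearMap g s

/-- If the tangential derivations `D_a` of `lie_m` and `D_b` of `lie_n` are special
(i.e. they kill `x_1 + ⋯ + x_m` resp. `x_1 + ⋯ + x_n`), then the composed tangential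
derivation `D_{a∘_ib}` of `lie_{m+n-1}` is also special (indices 0-based, `1 ≤ i ≤ m`
becoming `i < m`). -/
theorem special_comp_special (m n : ℕ) (hn : 1 ≤ n) (i : ℕ) (hi : i < m)
    (a : Fin m → lieF K m) (b : Fin n → lieF K n)
    (Da : DerL K m)
    (hDa : ∀ k : Fin m, Da (FreeLieAlgebra.of K k) = ⁅FreeLieAlgebra.of K k, a k⁆)
    (hDas : Da (∑ k : Fin m, FreeLieAlgebra.of K k) = 0)
    (Db : DerL K n)
    (hDb : ∀ k : Fin n, Db (FreeLieAlgebra.of K k) = ⁅FreeLieAlgebra.of K k, b k⁆)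
    (hDbs : Db (∑ k : Fin n, FreeLieAlgebra.of K k) = 0)
    (Dab : DerL K (m + n - 1))
    (hDab : ∀ k : Fin (m + n - 1),
      Dab (FreeLieAlgebra.of K k) = ⁅FreeLieAlgebra.of K k, compTup K a i b k⁆) :
    Dab (∑ k : Fin (m + n - 1), FreeLieAlgebra.of K k) = 0 := by
  classical
  have hiN : i + n ≤ m + n - 1 := by omega
  -- the specialness identities for `a` and `b`
  have Sa : ∑ j : Fin m, ⁅FreeLieAlgebra.of K j, a j⁆ = (0 : lieF K m) := by
    rw [← hDas, map_sum]
    exact Finset.sum_congr rfl fun j _ => (hDa j).symm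
  have Sb : ∑ j : Fin n, ⁅FreeLieAlgebra.of K j, b j⁆ = (0 : lieF K n) := by
    rw [← hDbs, map_sum]
    exact Finset.sum_congr rfl fun j _ => (hDb j).symm
  rw [map_sum]
  set Φ := PhiL K m n i with hΦ
  set Ψ := PsiL K m n i with hΨ
  set G : ℕ → lieF K (m + n - 1) := fun t =>
    ⁅xg K (m + n - 1) t,
      if t < i then Φ (tget K a t)
      else if t < i + n then Φ (tget K a i) + Ψ (tget K b (t - i))
      else Φ (tget K a (t + 1 - n))⁆ with hG
  -- rewrite the goal sum as a `range` sum of `G`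
  have key1 : ∑ k : Fin (m + n - 1), Dab (FreeLieAlgebra.of K k)
      = ∑ t ∈ Finset.range (m + n - 1), G t := by
    rw [← Fin.sum_univ_eq_sum_range G (m + n - 1)]
    refine Finset.sum_congr rfl fun k _ => ?_
    rw [hDab k, hG]
    simp only [compTup, xg, dif_pos k.isLt, Fin.eta, hΦ, hΨ]
  -- split the range into three consecutive intervals
  have split : ∑ t ∈ Finset.range (m + n - 1), G t
      = (∑ t ∈ Finset.Ico 0 i, G t) + (∑ t ∈ Finset.Ico i (i + n), G t)
        + (∑ t ∈ Finset.Ico (i + n) (m + n - 1), G t) := by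
    rw [Finset.sum_Ico_consecutive G (Nat.zero_le i) (by omega : i ≤ i + n),
      Finset.sum_Ico_consecutive G (Nat.zero_le (i + n)) hiN, Finset.range_eq_Ico]
  -- evaluate the three pieces
  have PA : ∑ t ∈ Finset.Ico 0 i, G t
      = ∑ t ∈ Finset.range i, ⁅xg K (m + n - 1) t, Φ (tget K a t)⁆ := by
    rw [← Finset.range_eq_Ico]
    refine Finset.sum_congr rfl fun t ht => ?_
    rw [hG]
    simp only [if_pos (Finset.mem_range.mp ht)]
  have PB : ∑ t ∈ Finset.Ico i (i + n), G t
      = (∑ t ∈ Finset.range n, ⁅xg K (m + n - 1) (i + t), Φ (tget K a i)⁆)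
        + ∑ t ∈ Finset.range n, ⁅xg K (m + n - 1) (i + t), Ψ (tget K b t)⁆ := by
    rw [Finset.sum_Ico_eq_sum_range]
    have hn' : i + n - i = n := by omega
    rw [hn', ← Finset.sum_add_distrib]
    refine Finset.sum_congr rfl fun t ht => ?_
    have ht' : t < n := Finset.mem_range.mp ht
    rw [hG]
    simp only [if_neg (by omega : ¬ i + t < i), if_pos (by omega : i + t < i + n),
      (by omega : i + t - i = t), lie_add]
  have PC : ∑ t ∈ Finset.Ico (i + n) (m + n - 1), G t
      = ∑ t ∈ Finset.range (m - (i + 1)),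
          ⁅xg K (m + n - 1) (i + n + t), Φ (tget K a (i + 1 + t))⁆ := by
    rw [Finset.sum_Ico_eq_sum_range]
    have hc : m + n - 1 - (i + n) = m - (i + 1) := by omega
    rw [hc]
    refine Finset.sum_congr rfl fun t ht => ?_
    rw [hG]
    simp only [if_neg (by omega : ¬ i + n + t < i), if_neg (by omega : ¬ i + n + t < i + n),
      (by omega : i + n + t + 1 - n = i + 1 + t)]
  -- evaluate the image of the `a`-identity under `Φ`
  have RPhi : Φ (∑ j : Fin m, ⁅FreeLieAlgebra.of K j, a j⁆)
      = (∑ t ∈ Finset.range i, ⁅xg K (m + n - 1) t, Φ (tget K a t)⁆)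
        + (∑ t ∈ Finset.range n, ⁅xg K (m + n - 1) (i + t), Φ (tget K a i)⁆)
        + ∑ t ∈ Finset.range (m - (i + 1)),
            ⁅xg K (m + n - 1) (i + n + t), Φ (tget K a (i + 1 + t))⁆ := by
    have step1 : Φ (∑ j : Fin m, ⁅FreeLieAlgebra.of K j, a j⁆)
        = ∑ j ∈ Finset.range m,
            ⁅(if j < i then xg K (m + n - 1) j
              else if j = i then ∑ t ∈ Finset.range n, xg K (m + n - 1) (i + t)
              else xg K (m + n - 1) (j + n - 1)), Φ (tget K a j)⁆ := by
      rw [lieHom_map_sum]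
      rw [← Fin.sum_univ_eq_sum_range (fun j =>
        ⁅(if j < i then xg K (m + n - 1) j
          else if j = i then ∑ t ∈ Finset.range n, xg K (m + n - 1) (i + t)
          else xg K (m + n - 1) (j + n - 1)), Φ (tget K a j)⁆) m]
      refine Finset.sum_congr rfl fun j _ => ?_
      rw [LieHom.map_lie]
      congr 1
      · rw [hΦ]
        simp only [PhiL, FreeLieAlgebra.lift_of_apply]
        rw [Fin.sum_univ_eq_sum_range (fun t => xg K (m + n - 1) (i + t)) n]
      · congr 1
        rw [tget, dif_pos j.isLt, Fin.eta]
    rw [step1]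
    rw [Finset.range_eq_Ico m,
      ← Finset.sum_Ico_consecutive _ (Nat.zero_le (i + 1)) (by omega : i + 1 ≤ m),
      ← Finset.sum_Ico_consecutive _ (Nat.zero_le i) (by omega : i ≤ i + 1)]
    congr 1
    · congr 1
      · rw [(Finset.range_eq_Ico i).symm]
        refine Finset.sum_congr rfl fun j hj => ?_
        rw [if_pos (Finset.mem_range.mp hj)]
      · rw [Finset.sum_Ico_eq_sum_range]
        simp only [show i + 1 - i = 1 from by omega, Finset.sum_range_one, Nat.add_zero]
        rw [if_neg (lt_irrefl i), if_pos trivial]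
        exact sum_lie' (Finset.range n) (fun t => xg K (m + n - 1) (i + t)) _
    · rw [Finset.sum_Ico_eq_sum_range]
      refine Finset.sum_congr rfl fun t ht => ?_
      rw [if_neg (by omega : ¬ i + 1 + t < i), if_neg (by omega : ¬ i + 1 + t = i),
        (by omega : i + 1 + t + n - 1 = i + n + t)]
  -- evaluate the image of the `b`-identity under `Ψ`
  have RPsi : Ψ (∑ j : Fin n, ⁅FreeLieAlgebra.of K j, b j⁆)
      = ∑ t ∈ Finset.range n, ⁅xg K (m + n - 1) (i + t), Ψ (tget K b t)⁆ := by
    rw [lieHom_map_sum]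
    rw [← Fin.sum_univ_eq_sum_range (fun t =>
      ⁅xg K (m + n - 1) (i + t), Ψ (tget K b t)⁆) n]
    refine Finset.sum_congr rfl fun j _ => ?_
    rw [LieHom.map_lie]
    congr 1
    · rw [hΨ]; simp only [PsiL, FreeLieAlgebra.lift_of_apply]
    · congr 1
      rw [tget, dif_pos j.isLt, Fin.eta]
  -- put everything together
  have total : ∑ k : Fin (m + n - 1), Dab (FreeLieAlgebra.of K k)
      = Φ (∑ j : Fin m, ⁅FreeLieAlgebra.of K j, a j⁆)
        + Ψ (∑ j : Fin n, ⁅FreeLieAlgebra.of K j, b j⁆) := by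
    rw [key1, split, PA, PB, PC, RPhi, RPsi]
    abel
  rw [total, Sa, Sb]
  simp
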